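/- Let R = k⟦x,y⟧/(x²y). Then the annihilator of the stable endomorphism module of R/xR equals xR, and the annihilator of the stable endomorphism module of R/yR equals (x²,y)R; consequently Ann(R/xR ⊕ R/yR) = (x², xy)R. -/

import Mathlib

open CategoryTheory IsLocalRing

universe u

variable (R : Type u) [CommRing R]

/-- The submodule of `Hom_R(M,N)` consisting of maps factoring through a projective module. -/
def projStable (M N : Type u) [AddCommGroup M] [Module R M] [AddCommGroup N] [Module R N] :
    Submodule R (M →ₗ[R] N) where
  carrier := {f | ∃ (P : Type u) (_ : AddCommGroup P) (_ : Module R P)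
    (_ : Module.Projective R P) (g : M →ₗ[R] P) (h : P →ₗ[R] N), f = h.comp g}
  zero_mem' := ⟨PUnit, inferInstance, inferInstance, inferInstance, 0, 0, by ext x; simp⟩
  add_mem' := by
    rintro f f' ⟨P, _, _, _, g, h, rfl⟩ ⟨P', _, _, _, g', h', rfl⟩
    exact ⟨P × P', inferInstance, inferInstance, inferInstance, g.prod g',
      h.comp (LinearMap.fst R P P') + h'.comp (LinearMap.snd R P P'), by ext x; simp⟩
  smul_mem' := by
    rintro r f ⟨P, _, _, _, g, h, rfl⟩
    exact ⟨P, inferInstance, inferInstance, inferInstance, g, r • h, by ext x; simp⟩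

/-- The stable hom module `Hom_R(M,N)/P_R(M,N)`. -/
def stableHom (M N : Type u) [AddCommGroup M] [Module R M] [AddCommGroup N] [Module R N] :=
  (M →ₗ[R] N) ⧸ projStable R M N

noncomputable instance (M N : Type u) [AddCommGroup M] [Module R M] [AddCommGroup N]
    [Module R N] : AddCommGroup (stableHom R M N) :=
  inferInstanceAs (AddCommGroup ((M →ₗ[R] N) ⧸ projStable R M N))

noncomputable instance (M N : Type u) [AddCommGroup M] [Module R M] [AddCommGroup N]
    [Module R N] : Module R (stableHom R M N) :=
  inferInstanceAs (Module R ((M →ₗ[R] N) ⧸ projStable R M N))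

/-- `Ann(M)`: the annihilator of the stable endomorphism module of `M`. -/
noncomputable def stAnn (M : Type u) [AddCommGroup M] [Module R M] : Ideal R :=
  Module.annihilator R (stableHom R M M)

/-- `Ext_R^n(M,N)` as an `R`-module. -/
noncomputable abbrev ExtM (n : ℕ) (M : ModuleCat.{u} R) (N : ModuleCat.{u} R) :
    ModuleCat.{u} R :=
  ((Ext R (ModuleCat.{u} R) n).obj (Opposite.op M)).obj N

/-- `ca^n(R)`, the `n`-th cohomology annihilator ideal. -/
noncomputable def ca (n : ℕ) : Ideal R :=
  ⨅ (m : ℕ) (_ : n ≤ m) (M : ModuleCat.{u} R) (N : ModuleCat.{u} R)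
    (_ : Module.Finite R M) (_ : Module.Finite R N),
    Module.annihilator R (ExtM R m M N)


/-- The one-dimensional D-infinity hypersurface `k⟦x,y⟧/(x²y)`. -/
noncomputable abbrev Dinf (k : Type u) [Field k] : Type u :=
  (MvPowerSeries (Fin 2) k) ⧸
    (Ideal.span {(MvPowerSeries.X (0 : Fin 2) : MvPowerSeries (Fin 2) k) ^ 2 *
      MvPowerSeries.X (1 : Fin 2)})

/-- The image of `x` in `k⟦x,y⟧/(x²y)`. -/
noncomputable def dx (k : Type u) [Field k] : Dinf k :=
  Ideal.Quotient.mk _ (MvPowerSeries.X 0)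

/-- The image of `y` in `k⟦x,y⟧/(x²y)`. -/
noncomputable def dy (k : Type u) [Field k] : Dinf k :=
  Ideal.Quotient.mk _ (MvPowerSeries.X 1)

/-! ### Auxiliary lemmas -/

section GeneralAux

variable {R}

theorem projStable_comp_left {M N K : Type u} [AddCommGroup M] [Module R M]
    [AddCommGroup N] [Module R N] [AddCommGroup K] [Module R K]
    {f : M →ₗ[R] N} (hf : f ∈ projStable R M N) (g : K →ₗ[R] M) :
    f.comp g ∈ projStable R K N := by
  obtain ⟨P, _, _, _, a, b, rfl⟩ := hf
  exact ⟨P, inferInstance, inferInstance, inferInstance, a.comp g, b,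
    (LinearMap.comp_assoc _ _ _).symm⟩

theorem projStable_comp_right {M N K : Type u} [AddCommGroup M] [Module R M]
    [AddCommGroup N] [Module R N] [AddCommGroup K] [Module R K]
    {f : M →ₗ[R] N} (hf : f ∈ projStable R M N) (g : N →ₗ[R] K) :
    g.comp f ∈ projStable R M K := by
  obtain ⟨P, _, _, _, a, b, rfl⟩ := hf
  exact ⟨P, inferInstance, inferInstance, inferInstance, a, g.comp b,
    LinearMap.comp_assoc _ _ _⟩

theorem mem_stAnn_iff {M : Type u} [AddCommGroup M] [Module R M] (r : R) :
    r ∈ stAnn R M ↔ r • (LinearMap.id : M →ₗ[R] M) ∈ projStable R M M := by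
  rw [stAnn, Module.mem_annihilator]
  constructor
  · intro h
    have h1 : (r • (Submodule.Quotient.mk LinearMap.id :
        (M →ₗ[R] M) ⧸ projStable R M M)) = 0 := h (Submodule.Quotient.mk LinearMap.id)
    rwa [← Submodule.Quotient.mk_smul, Submodule.Quotient.mk_eq_zero] at h1
  · intro h m
    obtain ⟨f, rfl⟩ := Submodule.Quotient.mk_surjective (projStable R M M) m
    show (r • (Submodule.Quotient.mk f : (M →ₗ[R] M) ⧸ projStable R M M)) = 0
    rw [← Submodule.Quotient.mk_smul, Submodule.Quotient.mk_eq_zero]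
    have e : r • f = (r • (LinearMap.id : M →ₗ[R] M)).comp f := by
      ext x; simp
    rw [e]
    exact projStable_comp_left h f

/-- The annihilator ideal of an element. -/
def annId (z : R) : Ideal R where
  carrier := {r | r * z = 0}
  zero_mem' := zero_mul z
  add_mem' := by
    intro a b ha hb
    simp only [Set.mem_setOf_eq] at *
    rw [add_mul, ha, hb, add_zero]
  smul_mem' := by
    intro c a ha
    simp only [smul_eq_mul, Set.mem_setOf_eq] at *
    rw [mul_assoc, ha, mul_zero]

theorem mem_annId {z r : R} : r ∈ annId z ↔ r * z = 0 := Iff.rfl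

theorem smul_id_mem_iff (z r : R) :
    r • (LinearMap.id : (R ⧸ Ideal.span {z}) →ₗ[R] (R ⧸ Ideal.span {z})) ∈
      projStable R (R ⧸ Ideal.span {z}) (R ⧸ Ideal.span {z}) ↔
      r ∈ Ideal.span {z} ⊔ annId z := by
  constructor
  · rintro ⟨P, _, _, _, g, h, hf⟩
    obtain ⟨h', hh'⟩ := Module.projective_lifting_property (Ideal.span {z}).mkQ h
      (Submodule.Quotient.mk_surjective _)
    set a := h' (g (Submodule.Quotient.mk 1)) with ha
    have haz : a ∈ annId z := by
      rw [mem_annId, mul_comm, ← smul_eq_mul]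
      have h1 : z • (Submodule.Quotient.mk (1 : R) : R ⧸ Ideal.span {z}) = 0 := by
        rw [← Submodule.Quotient.mk_smul, smul_eq_mul, mul_one,
          Submodule.Quotient.mk_eq_zero]
        exact Ideal.mem_span_singleton_self z
      rw [ha, ← map_smul, ← map_smul, h1, map_zero, map_zero]
    have key : (Submodule.Quotient.mk r : R ⧸ Ideal.span {z}) = Submodule.Quotient.mk a := by
      have e1 : (Ideal.span {z}).mkQ (h' (g (Submodule.Quotient.mk 1))) =
          h (g (Submodule.Quotient.mk 1)) := by
        rw [← LinearMap.comp_apply, hh']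
      have e2 : h (g (Submodule.Quotient.mk (1 : R))) =
          r • (Submodule.Quotient.mk (1 : R) : R ⧸ Ideal.span {z}) := by
        rw [← LinearMap.comp_apply, ← hf]
        simp
      rw [← ha] at e1
      rw [Submodule.mkQ_apply] at e1
      rw [e1, e2, ← Submodule.Quotient.mk_smul, smul_eq_mul, mul_one]
    have hra : r - a ∈ Ideal.span {z} := (Submodule.Quotient.eq _).mp key
    exact Submodule.mem_sup.mpr ⟨r - a, hra, a, haz, by ring⟩
  · intro hr
    obtain ⟨i, hi, a, haz, rfl⟩ := Submodule.mem_sup.mp hr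
    rw [add_smul]
    apply Submodule.add_mem
    · have e : i • (LinearMap.id : (R ⧸ Ideal.span {z}) →ₗ[R] (R ⧸ Ideal.span {z})) = 0 := by
        apply LinearMap.ext
        intro m
        obtain ⟨s, rfl⟩ := Submodule.Quotient.mk_surjective _ m
        simp only [LinearMap.smul_apply, LinearMap.id_apply, LinearMap.zero_apply]
        rw [← Submodule.Quotient.mk_smul, Submodule.Quotient.mk_eq_zero, smul_eq_mul]
        exact Ideal.mul_mem_right s _ hi
      rw [e]
      exact zero_mem _
    · have hker : Ideal.span {z} ≤ LinearMap.ker (a • (LinearMap.id : R →ₗ[R] R)) := by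
        intro s hs
        obtain ⟨c, hc⟩ := Ideal.mem_span_singleton'.mp hs
        simp only [LinearMap.mem_ker, LinearMap.smul_apply, LinearMap.id_apply, smul_eq_mul]
        have haz' : a * z = 0 := haz
        calc a * s = c * (a * z) := by rw [← hc]; ring
        _ = 0 := by rw [haz', mul_zero]
      refine ⟨R, inferInstance, inferInstance, inferInstance,
        Submodule.liftQ (Ideal.span {z}) (a • LinearMap.id) hker, (Ideal.span {z}).mkQ, ?_⟩
      apply LinearMap.ext
      intro m
      obtain ⟨s, rfl⟩ := Submodule.Quotient.mk_surjective _ m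
      simp only [LinearMap.smul_apply, LinearMap.id_apply, LinearMap.comp_apply,
        Submodule.liftQ_apply, Submodule.mkQ_apply]
      rw [← Submodule.Quotient.mk_smul]

theorem smul_id_prod_iff {M N : Type u} [AddCommGroup M] [Module R M]
    [AddCommGroup N] [Module R N] (r : R) :
    r • (LinearMap.id : (M × N) →ₗ[R] (M × N)) ∈ projStable R (M × N) (M × N) ↔
      (r • (LinearMap.id : M →ₗ[R] M) ∈ projStable R M M ∧
       r • (LinearMap.id : N →ₗ[R] N) ∈ projStable R N N) := by
  constructor
  · intro h
    constructor
    · have h1 := projStable_comp_left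
        (projStable_comp_right h (LinearMap.fst R M N)) (LinearMap.inl R M N)
      have e : ((LinearMap.fst R M N).comp
          (r • (LinearMap.id : (M × N) →ₗ[R] (M × N)))).comp (LinearMap.inl R M N)
          = r • (LinearMap.id : M →ₗ[R] M) := by
        ext m; simp
      rwa [e] at h1
    · have h1 := projStable_comp_left
        (projStable_comp_right h (LinearMap.snd R M N)) (LinearMap.inr R M N)
      have e : ((LinearMap.snd R M N).comp
          (r • (LinearMap.id : (M × N) →ₗ[R] (M × N)))).comp (LinearMap.inr R M N)
          = r • (LinearMap.id : N →ₗ[R] N) := by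
        ext n; simp
      rwa [e] at h1
  · rintro ⟨h1, h2⟩
    have e : r • (LinearMap.id : (M × N) →ₗ[R] (M × N)) =
        (LinearMap.inl R M N).comp ((r • (LinearMap.id : M →ₗ[R] M)).comp
          (LinearMap.fst R M N)) +
        (LinearMap.inr R M N).comp ((r • (LinearMap.id : N →ₗ[R] N)).comp
          (LinearMap.snd R M N)) := by
      apply LinearMap.ext
      rintro ⟨m, n⟩
      simp [Prod.ext_iff]
    rw [e]
    exact Submodule.add_mem _
      (projStable_comp_right (projStable_comp_left h1 (LinearMap.fst R M N))
        (LinearMap.inl R M N))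
      (projStable_comp_right (projStable_comp_left h2 (LinearMap.snd R M N))
        (LinearMap.inr R M N))

end GeneralAux

section PowerSeriesAux

open MvPowerSeries

variable (k : Type u) [Field k]

theorem X_ne0 (s : Fin 2) : (MvPowerSeries.X s : MvPowerSeries (Fin 2) k) ≠ 0 := by
  intro h
  have h2 := congrArg (MvPowerSeries.coeff (Finsupp.single s 1)) h
  rw [map_zero, MvPowerSeries.coeff_X, if_pos rfl] at h2
  exact one_ne_zero h2

theorem mem_span_XY {f : MvPowerSeries (Fin 2) k}
    (hf : MvPowerSeries.constantCoeff f = 0) :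
    f ∈ Ideal.span {(MvPowerSeries.X 0 : MvPowerSeries (Fin 2) k), MvPowerSeries.X 1} := by
  classical
  rw [Ideal.mem_span_pair]
  refine ⟨(fun d => if d 1 = 0 then MvPowerSeries.coeff (d + Finsupp.single 0 1) f else 0 :
      MvPowerSeries (Fin 2) k),
    (fun d => MvPowerSeries.coeff (d + Finsupp.single 1 1) f : MvPowerSeries (Fin 2) k), ?_⟩
  apply MvPowerSeries.ext
  intro d
  set g1 : MvPowerSeries (Fin 2) k := (fun d => if d 1 = 0 then
    MvPowerSeries.coeff (d + Finsupp.single 0 1) f else 0 : MvPowerSeries (Fin 2) k) with hg1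
  set g2 : MvPowerSeries (Fin 2) k :=
    (fun d => MvPowerSeries.coeff (d + Finsupp.single 1 1) f : MvPowerSeries (Fin 2) k) with hg2
  rw [map_add, MvPowerSeries.X_def, MvPowerSeries.X_def,
    MvPowerSeries.coeff_mul_monomial, MvPowerSeries.coeff_mul_monomial]
  have hc1 : ∀ e, MvPowerSeries.coeff e g1 =
      if e 1 = 0 then MvPowerSeries.coeff (e + Finsupp.single 0 1) f else 0 := fun e => rfl
  have hc2 : ∀ e, MvPowerSeries.coeff e g2 =
      MvPowerSeries.coeff (e + Finsupp.single 1 1) f := fun e => rfl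
  rw [hc1, hc2]
  simp only [mul_one]
  by_cases h1 : d 1 = 0
  · by_cases h0 : d 0 = 0
    · have hd : d = 0 := by
        ext i
        fin_cases i
        · exact h0
        · exact h1
      subst hd
      rw [if_neg, if_neg]
      · have h00 : MvPowerSeries.coeff 0 f = 0 := hf
        rw [h00, add_zero]
      · simp [Finsupp.single_le_iff]
      · simp [Finsupp.single_le_iff]
    · have hle : Finsupp.single (0 : Fin 2) 1 ≤ d :=
        Finsupp.single_le_iff.mpr (Nat.one_le_iff_ne_zero.mpr h0)
      have hne : ¬ Finsupp.single (1 : Fin 2) 1 ≤ d := by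
        simp [Finsupp.single_le_iff, h1]
      have hsub1 : ((d - Finsupp.single (0 : Fin 2) 1 : Fin 2 →₀ ℕ)) 1 = 0 := by
        rw [Finsupp.tsub_apply, Finsupp.single_apply, if_neg (by decide), h1]; rfl
      rw [if_pos hle, if_neg hne, if_pos hsub1, tsub_add_cancel_of_le hle, add_zero]
  · have hle : Finsupp.single (1 : Fin 2) 1 ≤ d :=
      Finsupp.single_le_iff.mpr (Nat.one_le_iff_ne_zero.mpr h1)
    rw [if_pos hle, tsub_add_cancel_of_le hle]
    by_cases h0' : Finsupp.single (0 : Fin 2) 1 ≤ d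
    · have hsub1 : ¬ ((d - Finsupp.single (0 : Fin 2) 1 : Fin 2 →₀ ℕ)) 1 = 0 := by
        rw [Finsupp.tsub_apply, Finsupp.single_apply, if_neg (by decide)]
        simpa using h1
      rw [if_pos h0', if_neg hsub1, zero_add]
    · rw [if_neg h0', zero_add]

theorem constCoeff_zero_of (A u v : MvPowerSeries (Fin 2) k)
    (h : MvPowerSeries.X 0 * A = u * MvPowerSeries.X 0 ^ 2 + v * MvPowerSeries.X 1) :
    MvPowerSeries.constantCoeff A = 0 := by
  classical
  have h2 := congrArg (MvPowerSeries.coeff (Finsupp.single (0 : Fin 2) 1)) h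
  rw [map_add, MvPowerSeries.X_pow_eq, MvPowerSeries.coeff_mul_monomial,
    MvPowerSeries.X_def, MvPowerSeries.X_def, MvPowerSeries.coeff_monomial_mul,
    MvPowerSeries.coeff_mul_monomial, if_pos le_rfl, tsub_self,
    if_neg (by simp [Finsupp.single_le_iff] : ¬ Finsupp.single (0 : Fin 2) 2 ≤ Finsupp.single (0 : Fin 2) 1),
    if_neg (by simp [Finsupp.single_le_iff] : ¬ Finsupp.single (1 : Fin 2) 1 ≤ Finsupp.single (0 : Fin 2) 1),
    one_mul] at h2
  simpa [MvPowerSeries.coeff_zero_eq_constantCoeff_apply] using h2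

theorem key3 (A : MvPowerSeries (Fin 2) k)
    (h : MvPowerSeries.X 0 * A ∈ Ideal.span
      {(MvPowerSeries.X 0 : MvPowerSeries (Fin 2) k) ^ 2, MvPowerSeries.X 1}) :
    MvPowerSeries.X 0 * A ∈ Ideal.span
      {(MvPowerSeries.X 0 : MvPowerSeries (Fin 2) k) ^ 2,
        MvPowerSeries.X 0 * MvPowerSeries.X 1} := by
  rw [Ideal.mem_span_pair] at h
  obtain ⟨u, v, huv⟩ := h
  have h0 := constCoeff_zero_of k A u v huv.symm
  obtain ⟨p, q, hpq⟩ := Ideal.mem_span_pair.mp (mem_span_XY k h0)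
  rw [Ideal.mem_span_pair]
  exact ⟨p, q, by linear_combination (MvPowerSeries.X (0 : Fin 2) :
    MvPowerSeries (Fin 2) k) * hpq⟩

end PowerSeriesAux

section DinfAux

variable (k : Type u) [Field k]

theorem annId_dx_le : annId (dx k) ≤ Ideal.span {dx k} := by
  intro r hr
  obtain ⟨u, rfl⟩ := Ideal.Quotient.mk_surjective r
  rw [mem_annId] at hr
  have h0 : (Ideal.Quotient.mk _ (u * MvPowerSeries.X 0) : Dinf k) = 0 := by
    rw [map_mul]; exact hr
  have h1 := Ideal.Quotient.eq_zero_iff_mem.mp h0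
  rw [Ideal.mem_span_singleton] at h1
  obtain ⟨c, hc⟩ := h1
  have hu : u = MvPowerSeries.X 0 * (MvPowerSeries.X 1 * c) :=
    mul_left_cancel₀ (X_ne0 k 0) (by linear_combination hc)
  rw [Ideal.mem_span_singleton]
  exact ⟨Ideal.Quotient.mk _ (MvPowerSeries.X 1 * c), by rw [hu, map_mul]; rfl⟩

theorem sup_dx : Ideal.span {dx k} ⊔ annId (dx k) = Ideal.span {dx k} :=
  sup_eq_left.mpr (annId_dx_le k)

theorem sup_dy : Ideal.span {dy k} ⊔ annId (dy k) = Ideal.span {dx k ^ 2, dy k} := by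
  apply le_antisymm
  · apply sup_le
    · exact Ideal.span_mono (Set.singleton_subset_iff.mpr (Set.mem_insert_of_mem _ rfl))
    · intro r hr
      obtain ⟨u, rfl⟩ := Ideal.Quotient.mk_surjective r
      rw [mem_annId] at hr
      have h0 : (Ideal.Quotient.mk _ (u * MvPowerSeries.X 1) : Dinf k) = 0 := by
        rw [map_mul]; exact hr
      have h1 := Ideal.Quotient.eq_zero_iff_mem.mp h0
      rw [Ideal.mem_span_singleton] at h1
      obtain ⟨c, hc⟩ := h1
      have hu : u = MvPowerSeries.X 0 ^ 2 * c :=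
        mul_left_cancel₀ (X_ne0 k 1) (by linear_combination hc)
      rw [Ideal.mem_span_pair]
      refine ⟨Ideal.Quotient.mk _ c, 0, ?_⟩
      rw [hu, zero_mul, add_zero, map_mul, map_pow, mul_comm]
      rfl
  · rw [Ideal.span_le]
    rintro t ht
    simp only [Set.mem_insert_iff, Set.mem_singleton_iff] at ht
    rcases ht with rfl | rfl
    · apply Submodule.mem_sup_right
      rw [mem_annId]
      have e : dx k ^ 2 * dy k =
          Ideal.Quotient.mk _ (MvPowerSeries.X 0 ^ 2 * MvPowerSeries.X 1) := by
        rw [map_mul, map_pow]; rfl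
      rw [e, Ideal.Quotient.eq_zero_iff_mem]
      exact Ideal.mem_span_singleton_self _
    · exact Submodule.mem_sup_left (Ideal.mem_span_singleton_self _)

theorem inter_eq : Ideal.span {dx k} ⊓ Ideal.span {dx k ^ 2, dy k}
    = Ideal.span {dx k ^ 2, dx k * dy k} := by
  apply le_antisymm
  · intro r hr
    obtain ⟨hr1, hr2⟩ := Submodule.mem_inf.mp hr
    obtain ⟨a, ha⟩ := Ideal.mem_span_singleton.mp hr1
    obtain ⟨A, hA⟩ := Ideal.Quotient.mk_surjective a
    obtain ⟨u, v, huv⟩ := Ideal.mem_span_pair.mp hr2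
    obtain ⟨U, hU⟩ := Ideal.Quotient.mk_surjective u
    obtain ⟨V, hV⟩ := Ideal.Quotient.mk_surjective v
    have hr' : r = Ideal.Quotient.mk _ (MvPowerSeries.X 0 * A) := by
      rw [ha, ← hA, map_mul]; rfl
    have h0 : (Ideal.Quotient.mk _ (U * MvPowerSeries.X 0 ^ 2 + V * MvPowerSeries.X 1 -
        MvPowerSeries.X 0 * A) : Dinf k) = 0 := by
      rw [map_sub, map_add, map_mul, map_mul, map_pow, hU, hV, ← hr']
      show u * dx k ^ 2 + v * dy k - r = 0
      rw [huv, sub_self]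
    have h1 := Ideal.Quotient.eq_zero_iff_mem.mp h0
    rw [Ideal.mem_span_singleton] at h1
    obtain ⟨W, hW⟩ := h1
    have hmem : MvPowerSeries.X 0 * A ∈ Ideal.span
        {(MvPowerSeries.X 0 : MvPowerSeries (Fin 2) k) ^ 2, MvPowerSeries.X 1} :=
      Ideal.mem_span_pair.mpr ⟨U - MvPowerSeries.X 1 * W, V, by linear_combination hW⟩
    obtain ⟨p, q, hpq⟩ := Ideal.mem_span_pair.mp (key3 k A hmem)
    rw [Ideal.mem_span_pair]
    refine ⟨Ideal.Quotient.mk _ p, Ideal.Quotient.mk _ q, ?_⟩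
    rw [hr', ← hpq]
    simp only [map_add, map_mul, map_pow]
    rfl
  · rw [Ideal.span_le]
    rintro t ht
    simp only [Set.mem_insert_iff, Set.mem_singleton_iff] at ht
    rcases ht with rfl | rfl
    · exact Submodule.mem_inf.mpr ⟨Ideal.mem_span_singleton.mpr ⟨dx k, sq (dx k)⟩,
        Ideal.subset_span (Set.mem_insert _ _)⟩
    · exact Submodule.mem_inf.mpr ⟨Ideal.mem_span_singleton.mpr ⟨dy k, rfl⟩,
        Ideal.mem_span_pair.mpr ⟨0, dx k, by ring⟩⟩

end DinfAux


/-- Let `R = k⟦x,y⟧/(x²y)` (char k ≠ 2). Then `Ann(R/xR) = xR`,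
`Ann(R/yR) = (x²,y)R`, and consequently `Ann(R/xR ⊕ R/yR) = (x², xy)R`. -/
theorem stmt9 (k : Type u) [Field k] (hchar : ringChar k ≠ 2) :
    stAnn (Dinf k) ((Dinf k) ⧸ (Ideal.span {dx k} : Ideal (Dinf k)))
      = Ideal.span {dx k} ∧
    stAnn (Dinf k) ((Dinf k) ⧸ (Ideal.span {dy k} : Ideal (Dinf k)))
      = Ideal.span {dx k ^ 2, dy k} ∧
    stAnn (Dinf k)
        (((Dinf k) ⧸ (Ideal.span {dx k} : Ideal (Dinf k))) ×
          ((Dinf k) ⧸ (Ideal.span {dy k} : Ideal (Dinf k))))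
      = Ideal.span {dx k ^ 2, dx k * dy k} := by
  refine ⟨?_, ?_, ?_⟩
  · exact Ideal.ext fun r =>
      (mem_stAnn_iff r).trans ((smul_id_mem_iff (dx k) r).trans (by rw [sup_dx]))
  · exact Ideal.ext fun r =>
      (mem_stAnn_iff r).trans ((smul_id_mem_iff (dy k) r).trans (by rw [sup_dy]))
  · refine Ideal.ext fun r => (mem_stAnn_iff r).trans ((smul_id_prod_iff r).trans ?_)
    refine ((smul_id_mem_iff (dx k) r).and (smul_id_mem_iff (dy k) r)).trans ?_
    rw [sup_dx, sup_dy, ← Submodule.mem_inf, inter_eq]
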